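/- Let δ > 0 and S ⊆ ℤ. If S ∩ (A − A) ≠ ∅ for every A ⊆ ℤ with d*(A) > δ, then S is a set of δ-recurrence. Here A − A := {a − b : a, b ∈ A} and d*(A) is the upper Banach density of A. -/

import Mathlib

/-- A measure preserving system: a probability space `(X, μ)` together with an
invertible measure preserving transformation `T : X → X`. -/
structure MPSystem where
  X : Type
  [mX : MeasurableSpace X]
  μ : MeasureTheory.Measure X
  prob : MeasureTheory.IsProbabilityMeasure μ
  T : X ≃ᵐ X
  mp : MeasureTheory.MeasurePreserving T μ μ

attribute [instance] MPSystem.mX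

open MeasureTheory Filter

namespace MPSystem

/-- The `n`-th iterate `Tⁿ` of the transformation, for `n : ℤ`. -/
def iter (𝒮 : MPSystem) (n : ℤ) : 𝒮.X → 𝒮.X :=
  fun x => ((𝒮.T.toEquiv : Equiv.Perm 𝒮.X) ^ n) x

/-- The system is ergodic: every measurable `D` with `μ(D △ T⁻¹D) = 0` has measure `0` or `1`. -/
def IsErgodic (𝒮 : MPSystem) : Prop :=
  ∀ D : Set 𝒮.X, MeasurableSet D → 𝒮.μ (symmDiff D (𝒮.T ⁻¹' D)) = 0 →
    𝒮.μ D = 0 ∨ 𝒮.μ D = 1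

/-- The product system `(X × X, μ × μ, T × T)`. -/
noncomputable def prod (𝒮 : MPSystem) : MPSystem where
  X := 𝒮.X × 𝒮.X
  μ := 𝒮.μ.prod 𝒮.μ
  prob := by have := 𝒮.prob; infer_instance
  T := 𝒮.T.prodCongr 𝒮.T
  mp := by have := 𝒮.prob; exact 𝒮.mp.prod 𝒮.mp

/-- The system is weak mixing: the product system `(X×X, μ×μ, T×T)` is ergodic. -/
def WeakMixing (𝒮 : MPSystem) : Prop := 𝒮.prod.IsErgodic

/-- The system is nontrivial: some measurable `D` has `μ(D △ T⁻¹D) > 0`. -/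
def Nontrivial (𝒮 : MPSystem) : Prop :=
  ∃ D : Set 𝒮.X, MeasurableSet D ∧ 0 < 𝒮.μ (symmDiff D (𝒮.T ⁻¹' D))

end MPSystem

/-- `S ⊆ ℤ` is a set of recurrence: for every measure preserving system and every
measurable `D` with `μ(D) > 0`, there is `n ∈ S` with `μ(D ∩ TⁿD) > 0`. -/
def IsRecurrenceSet (S : Set ℤ) : Prop :=
  ∀ (𝒮 : MPSystem) (D : Set 𝒮.X), MeasurableSet D → 0 < 𝒮.μ D →
    ∃ n ∈ S, 0 < 𝒮.μ (D ∩ 𝒮.iter n '' D)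

/-- `S ⊆ ℤ` is measure expanding: every translate `S + m` is a set of recurrence. -/
def MeasureExpanding (S : Set ℤ) : Prop :=
  ∀ m : ℤ, IsRecurrenceSet ((fun s => s + m) '' S)

/-- `S` is a set of `δ`-recurrence: for every measure preserving system and every
measurable `D` with `μ(D) > δ`, there is `n ∈ S` with `μ(D ∩ TⁿD) > 0`. -/
def IsDeltaRecurrenceSet (δ : ℝ) (S : Set ℤ) : Prop :=
  ∀ (𝒮 : MPSystem) (D : Set 𝒮.X), MeasurableSet D → ENNReal.ofReal δ < 𝒮.μ D →
    ∃ n ∈ S, 0 < 𝒮.μ (D ∩ 𝒮.iter n '' D)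

/-- `S` (an infinite set) is a set of rigidity for the system `𝒮`:
for every measurable `D` and every `ε > 0`, `{n ∈ S : μ(D △ TⁿD) > ε}` is finite. -/
def IsRigiditySetFor (S : Set ℤ) (𝒮 : MPSystem) : Prop :=
  S.Infinite ∧ ∀ D : Set 𝒮.X, MeasurableSet D → ∀ ε : ℝ, 0 < ε →
    {n ∈ S | ENNReal.ofReal ε < 𝒮.μ (symmDiff D (𝒮.iter n '' D))}.Finite

/-- `S` is a set of strong recurrence. -/
def IsStrongRecurrenceSet (S : Set ℤ) : Prop :=
  ∀ (𝒮 : MPSystem) (D : Set 𝒮.X), MeasurableSet D → 0 < 𝒮.μ D →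
    ∃ c : ℝ, 0 < c ∧ {n ∈ S | ENNReal.ofReal c < 𝒮.μ (D ∩ 𝒮.iter n '' D)}.Infinite

/-- `S` is a set of strong recurrence for weak mixing systems. -/
def IsStrongRecurrenceSetForWeakMixing (S : Set ℤ) : Prop :=
  ∀ (𝒮 : MPSystem), 𝒮.WeakMixing → ∀ (D : Set 𝒮.X), MeasurableSet D → 0 < 𝒮.μ D →
    ∃ c : ℝ, 0 < c ∧ {n ∈ S | ENNReal.ofReal c < 𝒮.μ (D ∩ 𝒮.iter n '' D)}.Infinite

/-- The circle group `𝕋 = ℝ/ℤ`. -/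
abbrev 𝕋 : Type := UnitAddCircle

/-- The character `e : 𝕋 → S¹ ⊆ ℂ`, `e(x) = exp(2πi x̃)` where `x̃` is a real
representative of `x`. -/
noncomputable def e (x : 𝕋) : ℂ := (AddCircle.toCircle x : ℂ)

/-- A tuple `α ∈ 𝕋^d` is independent if the only integer solution of
`n₁α₁ + ⋯ + n_dα_d = 0` is `n₁ = ⋯ = n_d = 0`. -/
def IndepTuple {d : ℕ} (α : Fin d → 𝕋) : Prop :=
  ∀ n : Fin d → ℤ, (∑ j, n j • α j) = 0 → ∀ j, n j = 0

/-- The Bohr set `Bohr(α, η) = {n ∈ ℤ : max_j ‖nαⱼ‖ < η}`. -/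
def BohrSet {d : ℕ} (α : Fin d → 𝕋) (η : ℝ) : Set ℤ :=
  {n : ℤ | ∀ j, ‖n • α j‖ < η}

/-- The Bohr–Hamming neighborhood `BH(α; ε, η) = {n ∈ ℤ : #{j : ‖nαⱼ‖ < ε} ≥ (1-η)d}`. -/
def BHNbhd {d : ℕ} (α : Fin d → 𝕋) (ε η : ℝ) : Set ℤ :=
  {n : ℤ | (1 - η) * d ≤ ({j : Fin d | ‖n • α j‖ < ε}.ncard : ℝ)}

/-- The upper Banach density of `A ⊆ ℤ`:
`d*(A) = lim_k sup_n |A ∩ {n+1,…,n+k}|/k` (realized as a `limsup`). -/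
noncomputable def upperBanachDensity (A : Set ℤ) : ℝ :=
  Filter.limsup
    (fun k : ℕ => ⨆ n : ℤ, ((A ∩ Set.Icc (n + 1) (n + k)).ncard : ℝ) / k) Filter.atTop

namespace MPSystem

variable (𝒮 : MPSystem)

lemma iter_mp (n : ℤ) : MeasurePreserving (𝒮.iter n) 𝒮.μ 𝒮.μ := by
  induction n using Int.induction_on with
  | zero => convert MeasurePreserving.id 𝒮.μ using 1; funext x; simp [iter]
  | succ k ih =>
      have he : 𝒮.iter ((k : ℤ) + 1) = 𝒮.iter k ∘ 𝒮.T := by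
        funext x
        show ((𝒮.T.toEquiv : Equiv.Perm 𝒮.X) ^ ((k:ℤ) + 1)) x = _
        rw [zpow_add_one]
        rfl
      rw [he]
      exact ih.comp 𝒮.mp
  | pred k ih =>
      have he : 𝒮.iter (-(k : ℤ) - 1) = 𝒮.iter (-k) ∘ 𝒮.T.symm := by
        funext x
        show ((𝒮.T.toEquiv : Equiv.Perm 𝒮.X) ^ (-(k:ℤ) - 1)) x = _
        rw [zpow_sub_one]
        rfl
      rw [he]
      exact ih.comp (MeasurePreserving.symm 𝒮.T 𝒮.mp)

lemma iter_add (m n : ℤ) (x : 𝒮.X) : 𝒮.iter (m + n) x = 𝒮.iter m (𝒮.iter n x) := by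
  show ((𝒮.T.toEquiv : Equiv.Perm 𝒮.X) ^ (m + n)) x = _
  rw [zpow_add]
  rfl

lemma iter_image (n : ℤ) (D : Set 𝒮.X) : 𝒮.iter n '' D = 𝒮.iter (-n) ⁻¹' D := by
  have h : ((𝒮.T.toEquiv : Equiv.Perm 𝒮.X) ^ n).symm = (𝒮.T.toEquiv : Equiv.Perm 𝒮.X) ^ (-n) := by
    rw [zpow_neg]; rfl
  show ⇑((𝒮.T.toEquiv : Equiv.Perm 𝒮.X) ^ n) '' D = _
  rw [Equiv.image_eq_preimage_symm, h]
  rfl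

end MPSystem

open ENNReal

/-- **Lemma.** Let `δ > 0` and `S ⊆ ℤ`. If `S ∩ (A − A) ≠ ∅` for every `A ⊆ ℤ` with
`d*(A) > δ`, then `S` is a set of `δ`-recurrence. -/
theorem deltaRecurrence_of_meets_difference_sets (δ : ℝ) (hδ : 0 < δ) (S : Set ℤ)
    (h : ∀ A : Set ℤ, δ < upperBanachDensity A →
      (S ∩ Set.image2 (fun a b => a - b) A A).Nonempty) :
    IsDeltaRecurrenceSet δ S := by
  classical
  intro 𝒮 D hD hμD
  by_contra hcon
  push_neg at hcon
  have hprob := 𝒮.prob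
  have hnull : ∀ n ∈ S, 𝒮.μ (D ∩ 𝒮.iter n '' D) = 0 :=
    fun n hn => le_antisymm (hcon n hn) zero_le
  have hDn : ∀ n : ℤ, MeasurableSet (𝒮.iter n '' D) := fun n => by
    rw [𝒮.iter_image]; exact (𝒮.iter_mp (-n)).measurable hD
  -- the bad null set
  set Nul : Set 𝒮.X := ⋃ (n : S) (a : ℤ), 𝒮.iter a ⁻¹' (D ∩ 𝒮.iter (n : ℤ) '' D) with hNul
  have hNulnull : 𝒮.μ Nul = 0 := by
    refine measure_iUnion_null fun n => measure_iUnion_null fun a => ?_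
    rw [(𝒮.iter_mp a).measure_preimage (hD.inter (hDn n)).nullMeasurableSet]
    exact hnull n n.2
  have hμD1 : 𝒮.μ D ≠ ∞ := (measure_lt_top _ _).ne
  set m := (𝒮.μ D).toReal with hm
  have hδm : δ < m := (ENNReal.ofReal_lt_iff_lt_toReal hδ.le hμD1).mp hμD
  set δ' : ℝ := (δ + m) / 2 with hδ'
  have hδδ' : δ < δ' := by rw [hδ']; linarith
  have hδ'm : δ' < m := by rw [hδ']; linarith
  have hδ'pos : 0 < δ' := lt_trans hδ hδδ'
  -- counting functions
  set f : ℕ → 𝒮.X → ℝ≥0∞ := fun k x => ∑ n ∈ Finset.Icc (1:ℤ) (k:ℤ), D.indicator 1 (𝒮.iter n x)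
    with hf
  have hgmeas : ∀ n : ℤ, Measurable (fun x => D.indicator (1 : 𝒮.X → ℝ≥0∞) (𝒮.iter n x)) :=
    fun n => (measurable_one.indicator hD).comp (𝒮.iter_mp n).measurable
  have hfmeas : ∀ k, Measurable (f k) := fun k => Finset.measurable_sum _ fun n _ => hgmeas n
  have hint : ∀ k : ℕ, ∫⁻ x, f k x ∂𝒮.μ = k * 𝒮.μ D := by
    intro k
    rw [hf]
    simp only []
    rw [lintegral_finset_sum _ fun n _ => hgmeas n]
    have heach : ∀ n ∈ Finset.Icc (1:ℤ) (k:ℤ),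
        ∫⁻ x, D.indicator 1 (𝒮.iter n x) ∂𝒮.μ = 𝒮.μ D := by
      intro n _
      rw [(𝒮.iter_mp n).lintegral_comp (measurable_one.indicator hD),
        lintegral_indicator_one hD]
    rw [Finset.sum_congr rfl heach, Finset.sum_const, Int.card_Icc]
    have : ((k:ℤ) + 1 - 1).toNat = k := by omega
    rw [this, nsmul_eq_mul]
  have hfle : ∀ k x, f k x ≤ (k : ℝ≥0∞) := by
    intro k x
    calc f k x ≤ ∑ _n ∈ Finset.Icc (1:ℤ) (k:ℤ), 1 := by
          refine Finset.sum_le_sum fun n _ => ?_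
          by_cases hx : 𝒮.iter n x ∈ D <;> simp [Set.indicator_apply, hx]
      _ = (k : ℝ≥0∞) := by
          rw [Finset.sum_const, Int.card_Icc]
          have : ((k:ℤ) + 1 - 1).toNat = k := by omega
          rw [this, nsmul_eq_mul, mul_one]
  set B : ℕ → Set 𝒮.X := fun k => {x | ENNReal.ofReal δ' * k ≤ f k x} with hB
  have hBmeas : ∀ k, MeasurableSet (B k) := fun k =>
    measurableSet_le measurable_const (hfmeas k)
  -- lower bound on μ (B k)
  set c0 : ℝ≥0∞ := 𝒮.μ D - ENNReal.ofReal δ' with hc0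
  have hc0pos : 0 < c0 := by
    rw [hc0]
    exact tsub_pos_of_lt ((ENNReal.ofReal_lt_iff_lt_toReal hδ'pos.le hμD1).mpr hδ'm)
  have hBlb : ∀ k : ℕ, 1 ≤ k → c0 ≤ 𝒮.μ (B k) := by
    intro k hk
    have hpt : ∀ x, f k x ≤ (B k).indicator (fun _ => (k:ℝ≥0∞)) x + ENNReal.ofReal δ' * k := by
      intro x
      by_cases hx : x ∈ B k
      · calc f k x ≤ (k:ℝ≥0∞) := hfle k x
          _ = (B k).indicator (fun _ => (k:ℝ≥0∞)) x := by rw [Set.indicator_of_mem hx]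
          _ ≤ _ := le_self_add
      · have : f k x ≤ ENNReal.ofReal δ' * k := (not_le.mp hx).le
        calc f k x ≤ ENNReal.ofReal δ' * k := this
          _ ≤ _ := le_add_self
    have h1 : (k:ℝ≥0∞) * 𝒮.μ D ≤ (k:ℝ≥0∞) * 𝒮.μ (B k) + ENNReal.ofReal δ' * k := by
      calc (k:ℝ≥0∞) * 𝒮.μ D = ∫⁻ x, f k x ∂𝒮.μ := (hint k).symm
        _ ≤ ∫⁻ x, ((B k).indicator (fun _ => (k:ℝ≥0∞)) x + ENNReal.ofReal δ' * k) ∂𝒮.μ :=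
            lintegral_mono hpt
        _ = (k:ℝ≥0∞) * 𝒮.μ (B k) + ENNReal.ofReal δ' * k := by
            rw [lintegral_add_right _ measurable_const,
              lintegral_indicator_const (hBmeas k), lintegral_const, measure_univ, mul_one]
    have hk0 : (k:ℝ≥0∞) ≠ 0 := by
      simp only [ne_eq, Nat.cast_eq_zero]; omega
    have hkt : (k:ℝ≥0∞) ≠ ∞ := ENNReal.natCast_ne_top k
    have h2 : 𝒮.μ D ≤ 𝒮.μ (B k) + ENNReal.ofReal δ' := by
      have h1' : (k:ℝ≥0∞) * 𝒮.μ D ≤ (k:ℝ≥0∞) * (𝒮.μ (B k) + ENNReal.ofReal δ') := by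
        rw [mul_add]
        calc (k:ℝ≥0∞) * 𝒮.μ D ≤ (k:ℝ≥0∞) * 𝒮.μ (B k) + ENNReal.ofReal δ' * k := h1
          _ = (k:ℝ≥0∞) * 𝒮.μ (B k) + (k:ℝ≥0∞) * ENNReal.ofReal δ' := by ring
      rwa [ENNReal.mul_le_mul_iff_right hk0 hkt] at h1'
    rw [hc0]
    exact tsub_le_iff_right.mpr h2
  -- the limsup set
  set L : Set 𝒮.X := ⋂ N : ℕ, ⋃ k : ℕ, B (N + 1 + k) with hL
  have hmono : Antitone (fun N : ℕ => ⋃ k : ℕ, B (N + 1 + k)) := by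
    intro a b hab
    refine Set.iUnion_subset fun k => ?_
    have hbk : b + 1 + k = a + 1 + (b - a + k) := by omega
    rw [hbk]
    exact Set.subset_iUnion (fun j => B (a + 1 + j)) (b - a + k)
  have hLμ : c0 ≤ 𝒮.μ L := by
    rw [hL, Antitone.measure_iInter hmono
      (fun N => (MeasurableSet.iUnion fun k => hBmeas _).nullMeasurableSet)
      ⟨0, measure_ne_top _ _⟩]
    refine le_iInf fun N => ?_
    exact le_trans (hBlb (N + 1 + 0) (by omega)) (measure_mono (Set.subset_iUnion (fun k : ℕ => B (N + 1 + k)) 0))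
  have hLNul : (L \ Nul).Nonempty := by
    apply nonempty_of_measure_ne_zero (μ := 𝒮.μ)
    rw [measure_diff_null hNulnull]
    exact fun h0 => hc0pos.ne' (le_antisymm (h0 ▸ hLμ) zero_le)
  obtain ⟨x, hxL, hxNul⟩ := hLNul
  -- the orbit set
  set A : Set ℤ := {n : ℤ | 𝒮.iter n x ∈ D} with hA
  have hcard : ∀ k : ℕ, f k x = ((A ∩ Set.Icc (1:ℤ) (k:ℤ)).ncard : ℝ≥0∞) := by
    intro k
    have hset : A ∩ Set.Icc (1:ℤ) (k:ℤ)
        = ↑((Finset.Icc (1:ℤ) (k:ℤ)).filter (fun n => 𝒮.iter n x ∈ D)) := by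
      ext n
      simp only [Set.mem_inter_iff, hA, Set.mem_setOf_eq, Set.mem_Icc, Finset.coe_filter,
        Finset.mem_Icc]
      tauto
    rw [hset, Set.ncard_coe_finset, hf]
    simp only [Set.indicator_apply, Pi.one_apply]
    rw [Finset.sum_boole]
  -- frequently k with x ∈ B k
  have hfreq : ∃ᶠ k in (atTop : Filter ℕ), 1 ≤ k ∧ x ∈ B k := by
    rw [frequently_atTop]
    intro N
    have := Set.mem_iInter.mp hxL N
    obtain ⟨j, hmem⟩ := Set.mem_iUnion.mp this
    exact ⟨N + 1 + j, by omega, by omega, hmem⟩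
  -- density estimate
  set g : ℕ → ℝ := fun k : ℕ => ⨆ n : ℤ, ((A ∩ Set.Icc (n + 1) (n + (k:ℤ))).ncard : ℝ) / k
    with hg
  have hIcc_card : ∀ (n : ℤ) (k : ℕ), (Set.Icc (n + 1) (n + (k:ℤ))).ncard = k := by
    intro n k
    rw [← Finset.coe_Icc, Set.ncard_coe_finset, Int.card_Icc]
    omega
  have hbdd : ∀ k : ℕ, 1 ≤ k → ∀ n : ℤ,
      ((A ∩ Set.Icc (n + 1) (n + (k:ℤ))).ncard : ℝ) / k ≤ 1 := by
    intro k hk n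
    rw [div_le_one (by exact_mod_cast hk)]
    have hsub : (A ∩ Set.Icc (n + 1) (n + (k:ℤ))).ncard ≤ k :=
      le_trans (Set.ncard_le_ncard Set.inter_subset_right (Set.finite_Icc _ _))
        (le_of_eq (hIcc_card n k))
    exact_mod_cast hsub
  have hglb : ∀ k : ℕ, 1 ≤ k → x ∈ B k → δ' ≤ g k := by
    intro k hk hxB
    have hkR : (0:ℝ) < k := by exact_mod_cast hk
    have hxB' : ENNReal.ofReal δ' * (k:ℝ≥0∞) ≤ f k x := hxB
    rw [hcard k] at hxB'
    have hreal : δ' * k ≤ ((A ∩ Set.Icc (1:ℤ) (k:ℤ)).ncard : ℝ) := by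
      have := hxB'
      rw [show ((k:ℕ) : ℝ≥0∞) = ENNReal.ofReal (k:ℝ) by
            rw [ENNReal.ofReal_natCast],
        ← ENNReal.ofReal_mul hδ'pos.le,
        show (((A ∩ Set.Icc (1:ℤ) (k:ℤ)).ncard : ℝ≥0∞)) =
          ENNReal.ofReal ((A ∩ Set.Icc (1:ℤ) (k:ℤ)).ncard : ℝ) by
            rw [ENNReal.ofReal_natCast]] at this
      exact (ENNReal.ofReal_le_ofReal_iff (by positivity)).mp this
    have h0 : δ' ≤ ((A ∩ Set.Icc ((0:ℤ) + 1) ((0:ℤ) + (k:ℤ))).ncard : ℝ) / k := by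
      rw [le_div_iff₀ hkR]
      simpa using hreal
    refine le_ciSup_of_le ⟨1, ?_⟩ 0 h0
    rintro y ⟨n, rfl⟩
    exact hbdd k hk n
  have hgbound : ∀ k : ℕ, g k ≤ 1 := by
    intro k
    rcases Nat.eq_zero_or_pos k with hk | hk
    · subst hk
      refine le_trans (ciSup_le fun n => ?_) (by norm_num : (0:ℝ) ≤ 1)
      simp
    · exact ciSup_le (hbdd k hk)
  have hdens : δ' ≤ upperBanachDensity A := by
    have hfreq' : ∃ᶠ k in (atTop : Filter ℕ), δ' ≤ g k :=
      hfreq.mono fun k ⟨hk1, hkB⟩ => hglb k hk1 hkB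
    exact le_limsup_of_frequently_le hfreq' (isBoundedUnder_of ⟨1, hgbound⟩)
  obtain ⟨s, hsS, hsAA⟩ := h A (lt_of_lt_of_le hδδ' hdens)
  obtain ⟨a, ha, b, hb, hab⟩ := Set.mem_image2.mp hsAA
  -- contradiction
  apply hxNul
  rw [hNul]
  refine Set.mem_iUnion.mpr ⟨⟨s, hsS⟩, Set.mem_iUnion.mpr ⟨a, ?_⟩⟩
  refine ⟨ha, ⟨𝒮.iter b x, hb, ?_⟩⟩
  rw [← 𝒮.iter_add s b x]
  have : s + b = a := by rw [← hab]; ring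
  rw [this]
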